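/- If (v₁, v₂) ∈ K is a fixed point of T_λ (i.e., T¹_λ(v₁,v₂) = v₁ and T²_λ(v₁,v₂) = v₂) with (v₁,v₂) ≠ (0,0), then (u₁, u₂) = (−v₁, −v₂) is a nontrivial convex solution of the system (⋆); conversely, if (u₁, u₂) is a nontrivial convex solution of (⋆), then (−u₁, −u₂) ∈ K and is a fixed point of T_λ. -/

import Mathlib

open Set Filter

/-- Sup norm of a function over `[0,1]`. -/
noncomputable def supNorm (v : ℝ → ℝ) : ℝ :=
  sSup ((fun t => |v t|) '' Icc (0:ℝ) 1)

/-- Membership in the cone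
`K = {(v₁,v₂) : vᵢ ≥ 0 on [0,1], min_{1/4 ≤ t ≤ 3/4} vᵢ(t) ≥ (1/4)‖vᵢ‖_∞, i = 1,2}`
(inside `C([0,1]) × C([0,1])`). -/
def InCone (v₁ v₂ : ℝ → ℝ) : Prop :=
  ContinuousOn v₁ (Icc 0 1) ∧ ContinuousOn v₂ (Icc 0 1) ∧
  (∀ t ∈ Icc (0:ℝ) 1, 0 ≤ v₁ t) ∧ (∀ t ∈ Icc (0:ℝ) 1, 0 ≤ v₂ t) ∧
  (∀ t ∈ Icc (1/4:ℝ) (3/4), (1/4) * supNorm v₁ ≤ v₁ t) ∧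
  (∀ t ∈ Icc (1/4:ℝ) (3/4), (1/4) * supNorm v₂ ≤ v₂ t)

/-- Component of the operator `T_λ`:
`(Tcomp N lam h w) r = ∫_r^1 (λ ∫_0^s N τ^{N-1} h(w(τ)) dτ)^{1/N} ds`;
`T¹_λ(v₁,v₂) = Tcomp N lam f v₂` and `T²_λ(v₁,v₂) = Tcomp N lam g v₁`. -/
noncomputable def Tcomp (N : ℕ) (lam : ℝ) (h : ℝ → ℝ) (w : ℝ → ℝ) : ℝ → ℝ :=
  fun r => ∫ s in r..1, (lam * ∫ τ in (0:ℝ)..s, (N:ℝ) * τ ^ (N - 1) * h (w τ)) ^ ((N:ℝ)⁻¹)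

/-- `Γ = (1/4) ∫_{1/4}^{3/4} (∫_{1/4}^s N τ^{N-1} dτ)^{1/N} ds`. -/
noncomputable def Gam (N : ℕ) : ℝ :=
  (1/4) * ∫ s in (1/4 : ℝ)..(3/4), (∫ τ in (1/4:ℝ)..s, (N:ℝ) * τ ^ (N - 1)) ^ ((N:ℝ)⁻¹)

/-- A nontrivial convex (radial) solution of the system (⋆):
`((u₁')^N)' = λ N r^{N-1} f(-u₂)`, `((u₂')^N)' = λ N r^{N-1} g(-u₁)` on `(0,1)`,
with `u₁'(0) = u₂'(0) = 0`, `u₁(1) = u₂(1) = 0`, `(u₁,u₂)` not identically zero,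
each `uᵢ` convex and continuously differentiable on `[0,1]`. -/
def IsNontrivialConvexSolution (N : ℕ) (f g : ℝ → ℝ) (lam : ℝ) (u₁ u₂ : ℝ → ℝ) : Prop :=
  ConvexOn ℝ (Icc (0:ℝ) 1) u₁ ∧ ConvexOn ℝ (Icc (0:ℝ) 1) u₂ ∧
  ∃ d₁ d₂ : ℝ → ℝ,
    ContinuousOn d₁ (Icc 0 1) ∧ ContinuousOn d₂ (Icc 0 1) ∧
    (∀ r ∈ Icc (0:ℝ) 1, HasDerivWithinAt u₁ (d₁ r) (Icc 0 1) r) ∧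
    (∀ r ∈ Icc (0:ℝ) 1, HasDerivWithinAt u₂ (d₂ r) (Icc 0 1) r) ∧
    (∀ r ∈ Ioo (0:ℝ) 1,
      HasDerivWithinAt (fun s => (d₁ s) ^ N) (lam * N * r ^ (N - 1) * f (-u₂ r)) (Ioo 0 1) r) ∧
    (∀ r ∈ Ioo (0:ℝ) 1,
      HasDerivWithinAt (fun s => (d₂ s) ^ N) (lam * N * r ^ (N - 1) * g (-u₁ r)) (Ioo 0 1) r) ∧
    d₁ 0 = 0 ∧ d₂ 0 = 0 ∧ u₁ 1 = 0 ∧ u₂ 1 = 0 ∧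
    ¬ (∀ t ∈ Icc (0:ℝ) 1, u₁ t = 0 ∧ u₂ t = 0)

section Aux

private lemma aux_T (N : ℕ) (hN : 1 ≤ N) (h : ℝ → ℝ)
    (hc : ContinuousOn h (Ici 0)) (hnn : ∀ x, 0 ≤ x → 0 ≤ h x)
    (lam : ℝ) (hlam : 0 < lam) (w : ℝ → ℝ)
    (hw : ContinuousOn w (Icc 0 1)) (hwnn : ∀ t ∈ Icc (0:ℝ) 1, 0 ≤ w t) :
    ∃ φ : ℝ → ℝ, Continuous φ ∧
      (∀ r ∈ Icc (0:ℝ) 1, Tcomp N lam h w r = ∫ s in r..1, φ s) ∧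
      (∀ r : ℝ, HasDerivAt (fun t => ∫ s in (1:ℝ)..t, φ s) (φ r) r) ∧
      φ 0 = 0 ∧ (∀ s ∈ Icc (0:ℝ) 1, 0 ≤ φ s) ∧ MonotoneOn φ (Icc 0 1) ∧
      (∀ r ∈ Icc (0:ℝ) 1,
        HasDerivWithinAt (fun s => (φ s) ^ N) (lam * (N:ℝ) * r ^ (N-1) * h (w r)) (Icc 0 1) r) := by
  have hN0 : N ≠ 0 := Nat.one_le_iff_ne_zero.mp hN
  have hNinv : (0:ℝ) < (N:ℝ)⁻¹ := by positivity
  set proj : ℝ → ℝ := fun t => max 0 (min t 1) with hproj_def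
  have hproj_mem : ∀ t, proj t ∈ Icc (0:ℝ) 1 :=
    fun t => ⟨le_max_left _ _, max_le zero_le_one (min_le_right _ _)⟩
  have hproj_id : ∀ t ∈ Icc (0:ℝ) 1, proj t = t := by
    intro t ht; simp [hproj_def, min_eq_left ht.2, max_eq_right ht.1]
  have hproj_cont : Continuous proj := continuous_const.max (continuous_id.min continuous_const)
  set q : ℝ → ℝ := fun τ => (N:ℝ) * τ ^ (N-1) * h (w (proj τ)) with hq_def
  have hwp : Continuous fun τ => w (proj τ) := hw.comp_continuous hproj_cont hproj_mem
  have hq_cont : Continuous q :=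
    ((continuous_const.mul (continuous_pow _)).mul
      (hc.comp_continuous hwp fun τ => hwnn _ (hproj_mem τ)))
  have hq_nn : ∀ τ, 0 ≤ τ → 0 ≤ q τ := fun τ hτ =>
    mul_nonneg (mul_nonneg (Nat.cast_nonneg _) (pow_nonneg hτ _))
      (hnn _ (hwnn _ (hproj_mem τ)))
  set F : ℝ → ℝ := fun s => lam * ∫ τ in (0:ℝ)..s, q τ with hF_def
  have hF_deriv : ∀ r, HasDerivAt F (lam * q r) r := fun r =>
    (intervalIntegral.integral_hasDerivAt_right (hq_cont.intervalIntegrable _ _)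
      (hq_cont.stronglyMeasurable.stronglyMeasurableAtFilter) hq_cont.continuousAt).const_mul lam
  have hF_nn : ∀ s, 0 ≤ s → 0 ≤ F s := fun s hs =>
    mul_nonneg hlam.le (intervalIntegral.integral_nonneg hs fun u hu => hq_nn u hu.1)
  have hF_mono : MonotoneOn F (Icc (0:ℝ) 1) := by
    intro a ha b hb hab
    have : F b - F a = lam * ∫ τ in a..b, q τ := by
      rw [hF_def]; rw [← mul_sub]
      rw [intervalIntegral.integral_interval_sub_left (hq_cont.intervalIntegrable _ _)
        (hq_cont.intervalIntegrable _ _)]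
    have h2 : 0 ≤ lam * ∫ τ in a..b, q τ :=
      mul_nonneg hlam.le (intervalIntegral.integral_nonneg hab
        fun u hu => hq_nn u (ha.1.trans hu.1))
    linarith
  set φ : ℝ → ℝ := fun s => F s ^ ((N:ℝ)⁻¹) with hφ_def
  have hφ_cont : Continuous φ := by
    rw [continuous_iff_continuousAt]
    intro x
    exact (Real.continuousAt_rpow_const _ _ (Or.inr hNinv.le)).comp
      (hF_deriv x).continuousAt
  have hφN : ∀ s ∈ Icc (0:ℝ) 1, (φ s) ^ N = F s := fun s hs =>
    Real.rpow_inv_natCast_pow (hF_nn s hs.1) hN0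
  refine ⟨φ, hφ_cont, ?_, ?_, ?_, ?_, ?_, ?_⟩
  · intro r hr
    unfold Tcomp
    apply intervalIntegral.integral_congr
    intro s hs
    rw [uIcc_of_le hr.2] at hs
    have h0s : (0:ℝ) ≤ s := hr.1.trans hs.1
    have hinner : (∫ τ in (0:ℝ)..s, (N:ℝ) * τ ^ (N-1) * h (w τ)) = ∫ τ in (0:ℝ)..s, q τ := by
      apply intervalIntegral.integral_congr
      intro τ hτ
      rw [uIcc_of_le h0s] at hτ
      rw [hq_def]
      simp only []
      rw [hproj_id τ ⟨hτ.1, hτ.2.trans hs.2⟩]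
    simp only [hinner, hφ_def, hF_def]
  · intro r
    exact intervalIntegral.integral_hasDerivAt_right (hφ_cont.intervalIntegrable _ _)
      (hφ_cont.stronglyMeasurable.stronglyMeasurableAtFilter) hφ_cont.continuousAt
  · rw [hφ_def]
    simp only [hF_def, intervalIntegral.integral_same, mul_zero]
    exact Real.zero_rpow (ne_of_gt hNinv)
  · exact fun s hs => Real.rpow_nonneg (hF_nn s hs.1) _
  · exact fun a ha b hb hab => Real.rpow_le_rpow (hF_nn a ha.1) (hF_mono ha hb hab) hNinv.le
  · intro r hr
    have h1 := ((hF_deriv r).hasDerivWithinAt (s := Icc (0:ℝ) 1)).congr hφN (hφN r hr)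
    refine h1.congr_deriv ?_
    rw [hq_def]
    simp only []
    rw [hproj_id r hr]
    ring

private lemma aux_side (φ v : ℝ → ℝ) (hφc : Continuous φ)
    (hH : ∀ r, HasDerivAt (fun t => ∫ s in (1:ℝ)..t, φ s) (φ r) r)
    (hmono : MonotoneOn φ (Icc 0 1))
    (hvc : ContinuousOn v (Icc 0 1))
    (hveq : ∀ r ∈ Icc (0:ℝ) 1, v r = ∫ s in r..1, φ s) :
    (∀ r ∈ Icc (0:ℝ) 1, HasDerivWithinAt (fun t => -v t) (φ r) (Icc 0 1) r) ∧
    ConvexOn ℝ (Icc (0:ℝ) 1) (fun t => -v t) := by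
  have heq : ∀ t ∈ Icc (0:ℝ) 1, (fun t => -v t) t = ∫ s in (1:ℝ)..t, φ s := by
    intro t ht
    simp only
    rw [hveq t ht, intervalIntegral.integral_symm, neg_neg]
  have hder : ∀ r ∈ Icc (0:ℝ) 1, HasDerivWithinAt (fun t => -v t) (φ r) (Icc 0 1) r :=
    fun r hr => ((hH r).hasDerivWithinAt).congr heq (heq r hr)
  have hdAt : ∀ x ∈ Ioo (0:ℝ) 1, HasDerivAt (fun t => -v t) (φ x) x := fun x hx =>
    (hH x).congr_of_eventuallyEq
      (Filter.eventuallyEq_of_mem (Icc_mem_nhds hx.1 hx.2) heq)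
  refine ⟨hder, MonotoneOn.convexOn_of_deriv (convex_Icc 0 1) hvc.neg ?_ ?_⟩
  · rw [interior_Icc]
    intro x hx
    exact (hdAt x hx).differentiableAt.differentiableWithinAt
  · rw [interior_Icc]
    intro a ha b hb hab
    rw [(hdAt a ha).deriv, (hdAt b hb).deriv]
    exact hmono (Ioo_subset_Icc_self ha) (Ioo_subset_Icc_self hb) hab

private lemma aux_sol (u d : ℝ → ℝ) (hconv : ConvexOn ℝ (Icc (0:ℝ) 1) u)
    (hd : ∀ r ∈ Icc (0:ℝ) 1, HasDerivWithinAt u (d r) (Icc 0 1) r)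
    (hd0 : d 0 = 0) (hu1 : u 1 = 0) :
    (∀ t ∈ Icc (0:ℝ) 1, u 0 ≤ u t) ∧ (∀ t ∈ Icc (0:ℝ) 1, u t ≤ (1 - t) * u 0) ∧
    (∀ t ∈ Icc (0:ℝ) 1, u t ≤ 0) ∧ (∀ t ∈ Icc (0:ℝ) 1, 0 ≤ d t) := by
  have mem0 : (0:ℝ) ∈ Icc (0:ℝ) 1 := ⟨le_refl _, zero_le_one⟩
  have mem1 : (1:ℝ) ∈ Icc (0:ℝ) 1 := ⟨zero_le_one, le_refl _⟩
  have ha : ∀ t ∈ Icc (0:ℝ) 1, u 0 ≤ u t := by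
    intro t ht
    rcases eq_or_lt_of_le ht.1 with h0 | h0
    · rw [← h0]
    · have := hconv.le_slope_of_hasDerivWithinAt mem0 ht h0 (hd 0 mem0)
      rw [hd0, slope_def_field] at this
      rcases div_nonneg_iff.mp this with h2 | h2
      · linarith [h2.1]
      · linarith [h2.1, h2.2]
  have hb : ∀ t ∈ Icc (0:ℝ) 1, u t ≤ (1 - t) * u 0 := by
    intro t ht
    have := hconv.2 mem0 mem1 (show (0:ℝ) ≤ 1 - t by linarith [ht.2]) ht.1 (by ring)
    simp only [smul_eq_mul, mul_zero, mul_one, zero_add] at this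
    rw [hu1] at this
    linarith [this]
  have hu00 : u 0 ≤ 0 := by have := ha 1 mem1; rw [hu1] at this; linarith
  have hcnp : ∀ t ∈ Icc (0:ℝ) 1, u t ≤ 0 := by
    intro t ht
    have := hb t ht
    nlinarith [ht.1, ht.2]
  refine ⟨ha, hb, hcnp, ?_⟩
  intro t ht
  rcases eq_or_lt_of_le ht.1 with h0 | h0
  · rw [← h0, hd0]
  · have hsl := hconv.slope_le_of_hasDerivWithinAt mem0 ht h0 (hd t ht)
    rw [slope_def_field] at hsl
    have : 0 ≤ (u t - u 0) / (t - 0) :=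
      div_nonneg (by linarith [ha t ht]) (by linarith)
    linarith

private lemma aux_fix (N : ℕ) (hN : 1 ≤ N) (f : ℝ → ℝ) (hfc : ContinuousOn f (Ici 0))
    (lam : ℝ) (u y d : ℝ → ℝ)
    (hu : ∀ r ∈ Icc (0:ℝ) 1, HasDerivWithinAt u (d r) (Icc 0 1) r)
    (hdc : ContinuousOn d (Icc 0 1))
    (hdnn : ∀ r ∈ Icc (0:ℝ) 1, 0 ≤ d r)
    (hycont : ContinuousOn y (Icc 0 1)) (hynp : ∀ t ∈ Icc (0:ℝ) 1, y t ≤ 0)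
    (hode : ∀ r ∈ Ioo (0:ℝ) 1,
      HasDerivWithinAt (fun s => (d s) ^ N) (lam * N * r ^ (N-1) * f (-y r)) (Ioo 0 1) r)
    (hd0 : d 0 = 0) (hu1 : u 1 = 0) :
    ∀ r ∈ Icc (0:ℝ) 1, Tcomp N lam f (fun t => -y t) r = -u r := by
  have hN0 : N ≠ 0 := Nat.one_le_iff_ne_zero.mp hN
  have hG'cont : ContinuousOn (fun x : ℝ => lam * ((N:ℝ) * x ^ (N-1) * f (-y x))) (Icc 0 1) := by
    have h1 : ContinuousOn (fun x : ℝ => f (-y x)) (Icc 0 1) := by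
      apply hfc.comp (hycont.neg)
      intro x hx
      simp only [mem_Ici, Pi.neg_apply, neg_nonneg]
      exact hynp x hx
    exact continuousOn_const.mul
      ((continuousOn_const.mul ((continuous_pow (N-1)).continuousOn)).mul h1)
  have key : ∀ s ∈ Icc (0:ℝ) 1,
      lam * (∫ τ in (0:ℝ)..s, (N:ℝ) * τ ^ (N-1) * f (-y τ)) = (d s) ^ N := by
    intro s hs
    have hftc := intervalIntegral.integral_eq_sub_of_hasDeriv_right_of_le hs.1
      (f := fun x => (d x) ^ N) (f' := fun x => lam * ((N:ℝ) * x ^ (N-1) * f (-y x)))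
      (((hdc.mono (Icc_subset_Icc_right hs.2))).pow N)
      (fun x hx => by
        have hx1 : x ∈ Ioo (0:ℝ) 1 := ⟨hx.1, lt_of_lt_of_le hx.2 hs.2⟩
        have := (hode x hx1).hasDerivAt (Ioo_mem_nhds hx1.1 hx1.2)
        exact (this.hasDerivWithinAt).congr_deriv (by ring))
      (((hG'cont.mono (Icc_subset_Icc_right hs.2)).mono (by rw [uIcc_of_le hs.1])).intervalIntegrable)
    simp only [hd0, zero_pow hN0, sub_zero] at hftc
    rw [← hftc, intervalIntegral.integral_const_mul]
  have Tint : ∀ r ∈ Icc (0:ℝ) 1, Tcomp N lam f (fun t => -y t) r = ∫ s in r..1, d s := by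
    intro r hr
    unfold Tcomp
    apply intervalIntegral.integral_congr
    intro s hs
    rw [uIcc_of_le hr.2] at hs
    have hs01 : s ∈ Icc (0:ℝ) 1 := ⟨hr.1.trans hs.1, hs.2⟩
    have := key s hs01
    simp only [neg_neg] at this ⊢
    rw [this]
    exact Real.pow_rpow_inv_natCast (hdnn s hs01) hN0
  intro r hr
  rw [Tint r hr]
  have hucont : ContinuousOn u (Icc 0 1) := fun x hx => (hu x hx).continuousWithinAt
  have hftc2 := intervalIntegral.integral_eq_sub_of_hasDeriv_right_of_le hr.2
    (f := u) (f' := d)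
    (hucont.mono (Icc_subset_Icc_left hr.1))
    (fun x hx => by
      have hx01 : x ∈ Icc (0:ℝ) 1 := ⟨(hr.1.trans hx.1.le), hx.2.le⟩
      have := (hu x hx01).hasDerivAt (Icc_mem_nhds (lt_of_le_of_lt hr.1 hx.1) hx.2)
      exact this.hasDerivWithinAt)
    (((hdc.mono (Icc_subset_Icc_left hr.1)).mono (by rw [uIcc_of_le hr.2])).intervalIntegrable)
  rw [hftc2, hu1, zero_sub]

private lemma aux_sup (u : ℝ → ℝ) (hA : ∀ t ∈ Icc (0:ℝ) 1, u 0 ≤ u t)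
    (hC : ∀ t ∈ Icc (0:ℝ) 1, u t ≤ 0) : supNorm (fun t => -u t) = -u 0 := by
  have mem0 : (0:ℝ) ∈ Icc (0:ℝ) 1 := ⟨le_refl _, zero_le_one⟩
  have hg : IsGreatest ((fun t => |(fun t => -u t) t|) '' Icc (0:ℝ) 1) (-u 0) := by
    constructor
    · exact ⟨0, mem0, by simp [abs_of_nonneg (neg_nonneg.2 (hC 0 mem0))]⟩
    · rintro x ⟨t, ht, rfl⟩
      simp only
      rw [abs_of_nonneg (neg_nonneg.2 (hC t ht))]
      linarith [hA t ht]
  exact hg.csSup_eq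

end Aux

theorem fixed_point_iff_solution
    (N : ℕ) (hN : 1 ≤ N) (f g : ℝ → ℝ)
    (hfc : ContinuousOn f (Ici 0)) (hgc : ContinuousOn g (Ici 0))
    (hfnn : ∀ x, 0 ≤ x → 0 ≤ f x) (hgnn : ∀ x, 0 ≤ x → 0 ≤ g x)
    (lam : ℝ) (hlam : 0 < lam) :
    (∀ v₁ v₂ : ℝ → ℝ, InCone v₁ v₂ →
      (∀ r ∈ Icc (0:ℝ) 1, Tcomp N lam f v₂ r = v₁ r) →
      (∀ r ∈ Icc (0:ℝ) 1, Tcomp N lam g v₁ r = v₂ r) →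
      (¬ ∀ t ∈ Icc (0:ℝ) 1, v₁ t = 0 ∧ v₂ t = 0) →
      IsNontrivialConvexSolution N f g lam (fun t => -v₁ t) (fun t => -v₂ t)) ∧
    (∀ u₁ u₂ : ℝ → ℝ, IsNontrivialConvexSolution N f g lam u₁ u₂ →
      InCone (fun t => -u₁ t) (fun t => -u₂ t) ∧
      (∀ r ∈ Icc (0:ℝ) 1, Tcomp N lam f (fun t => -u₂ t) r = -u₁ r) ∧
      (∀ r ∈ Icc (0:ℝ) 1, Tcomp N lam g (fun t => -u₁ t) r = -u₂ r)) := by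
  have mem1 : (1:ℝ) ∈ Icc (0:ℝ) 1 := ⟨zero_le_one, le_refl _⟩
  constructor
  · rintro v₁ v₂ ⟨hv₁c, hv₂c, hv₁nn, hv₂nn, -, -⟩ hfix₁ hfix₂ hnz
    obtain ⟨φ₁, hφ₁c, hT₁, hH₁, hφ₁0, hφ₁nn, hφ₁mono, hφ₁ode⟩ :=
      aux_T N hN f hfc hfnn lam hlam v₂ hv₂c hv₂nn
    obtain ⟨φ₂, hφ₂c, hT₂, hH₂, hφ₂0, hφ₂nn, hφ₂mono, hφ₂ode⟩ :=
      aux_T N hN g hgc hgnn lam hlam v₁ hv₁c hv₁nn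
    have hveq₁ : ∀ r ∈ Icc (0:ℝ) 1, v₁ r = ∫ s in r..1, φ₁ s :=
      fun r hr => (hfix₁ r hr).symm.trans (hT₁ r hr)
    have hveq₂ : ∀ r ∈ Icc (0:ℝ) 1, v₂ r = ∫ s in r..1, φ₂ s :=
      fun r hr => (hfix₂ r hr).symm.trans (hT₂ r hr)
    obtain ⟨hder₁, hconv₁⟩ := aux_side φ₁ v₁ hφ₁c hH₁ hφ₁mono hv₁c hveq₁
    obtain ⟨hder₂, hconv₂⟩ := aux_side φ₂ v₂ hφ₂c hH₂ hφ₂mono hv₂c hveq₂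
    refine ⟨hconv₁, hconv₂, φ₁, φ₂, hφ₁c.continuousOn, hφ₂c.continuousOn,
      hder₁, hder₂, ?_, ?_, hφ₁0, hφ₂0, ?_, ?_, ?_⟩
    · intro r hr
      have := (hφ₁ode r (Ioo_subset_Icc_self hr)).mono Ioo_subset_Icc_self
      simp only [neg_neg]
      exact this
    · intro r hr
      have := (hφ₂ode r (Ioo_subset_Icc_self hr)).mono Ioo_subset_Icc_self
      simp only [neg_neg]
      exact this
    · simp only
      rw [hveq₁ 1 mem1, intervalIntegral.integral_same, neg_zero]
    · simp only
      rw [hveq₂ 1 mem1, intervalIntegral.integral_same, neg_zero]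
    · intro hz
      exact hnz fun t ht =>
        ⟨neg_eq_zero.mp (hz t ht).1, neg_eq_zero.mp (hz t ht).2⟩
  · rintro u₁ u₂ ⟨hconv₁, hconv₂, d₁, d₂, hd₁c, hd₂c, hd₁, hd₂, ode₁, ode₂,
      hd₁0, hd₂0, hu₁1, hu₂1, hnt⟩
    obtain ⟨ha₁, hb₁, hc₁, hdnn₁⟩ := aux_sol u₁ d₁ hconv₁ hd₁ hd₁0 hu₁1
    obtain ⟨ha₂, hb₂, hc₂, hdnn₂⟩ := aux_sol u₂ d₂ hconv₂ hd₂ hd₂0 hu₂1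
    have hu₁cont : ContinuousOn u₁ (Icc 0 1) := fun x hx => (hd₁ x hx).continuousWithinAt
    have hu₂cont : ContinuousOn u₂ (Icc 0 1) := fun x hx => (hd₂ x hx).continuousWithinAt
    have hmin : ∀ (u : ℝ → ℝ), (∀ t ∈ Icc (0:ℝ) 1, u 0 ≤ u t) →
        (∀ t ∈ Icc (0:ℝ) 1, u t ≤ (1 - t) * u 0) → (∀ t ∈ Icc (0:ℝ) 1, u t ≤ 0) →
        ∀ t ∈ Icc (1/4:ℝ) (3/4), (1/4) * supNorm (fun t => -u t) ≤ -u t := by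
      intro u hA hB hC t ht
      have ht01 : t ∈ Icc (0:ℝ) 1 := ⟨by linarith [ht.1], by linarith [ht.2]⟩
      rw [aux_sup u hA hC]
      have hb := hB t ht01
      have h0 : u 0 ≤ 0 := hC 0 ⟨le_refl _, zero_le_one⟩
      nlinarith [mul_nonneg (show (0:ℝ) ≤ 1 - t - 1/4 by linarith [ht.2])
        (show (0:ℝ) ≤ -u 0 by linarith)]
    refine ⟨⟨hu₁cont.neg, hu₂cont.neg, fun t ht => neg_nonneg.2 (hc₁ t ht),
        fun t ht => neg_nonneg.2 (hc₂ t ht), hmin u₁ ha₁ hb₁ hc₁, hmin u₂ ha₂ hb₂ hc₂⟩,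
      aux_fix N hN f hfc lam u₁ u₂ d₁ hd₁ hd₁c hdnn₁ hu₂cont hc₂ ode₁ hd₁0 hu₁1,
      aux_fix N hN g hgc lam u₂ u₁ d₂ hd₂ hd₂c hdnn₂ hu₁cont hc₁ ode₂ hd₂0 hu₂1⟩
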